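/- Let (X, Y, ⟨·,·⟩) be a dual pairing, T ⊆ X × Y, and w = (x₀,y₀) ∈ T. Then Rockafellar's antiderivative satisfies r_T^w(x) = φ⁽∞⁾_T(x, y₀) - ⟨x₀, y₀⟩ for all x ∈ X. -/

import Mathlib

variable {X Y : Type*} [AddCommGroup X] [Module ℝ X] [AddCommGroup Y] [Module ℝ Y]

/-- Rockafellar's antiderivative of `T` based at `(x₀, y₀)`. -/
noncomputable def rock (b : X →ₗ[ℝ] Y →ₗ[ℝ] ℝ) (T : Set (X × Y))
    (x₀ : X) (y₀ : Y) (x : X) : EReal :=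
  sSup {r : EReal | ∃ n : ℕ, 1 ≤ n ∧ ∃ c : ℕ → X × Y, c 0 = (x₀, y₀) ∧
    (∀ i ∈ Finset.Icc 1 n, c i ∈ T) ∧
    r = ((b (x - (c n).1) (c n).2
        + ∑ i ∈ Finset.range n, b ((c (i + 1)).1 - (c i).1) (c i).2 : ℝ) : EReal)}

/-- The `∞`-Fitzpatrick function `φ⁽∞⁾_T = sup_{n ≥ 1} φ⁽ⁿ⁾_T`. -/
noncomputable def fitzInf (b : X →ₗ[ℝ] Y →ₗ[ℝ] ℝ) (T : Set (X × Y))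
    (x : X) (y : Y) : EReal :=
  sSup {r : EReal | ∃ n : ℕ, 1 ≤ n ∧ ∃ c : ℕ → X × Y,
    (∀ i ∈ Finset.Icc 1 n, c i ∈ T) ∧
    r = ((b (x - (c 1).1) (c 1).2
        + ∑ i ∈ Finset.Icc 2 n, b ((c (i - 1)).1 - (c i).1) (c i).2
        + b (c n).1 y : ℝ) : EReal)}

noncomputable def subOrderIso (c : ℝ) : EReal ≃o EReal where
  toFun t := t - (c : EReal)
  invFun t := t + (c : EReal)
  left_inv t := EReal.sub_add_cancel
  right_inv t := EReal.add_sub_cancel_right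
  map_rel_iff' := by
    intro a b
    rw [Equiv.coe_fn_mk, EReal.sub_le_iff_le_add (Or.inl (EReal.coe_ne_bot c))
      (Or.inl (EReal.coe_ne_top c)), EReal.sub_add_cancel]

lemma sSup_image_sub (S : Set EReal) (c : ℝ) :
    sSup ((fun s => s - (c : EReal)) '' S) = sSup S - (c : EReal) := by
  exact (map_sSup (subOrderIso c) S).symm

lemma sum_rev (n : ℕ) (hn : 1 ≤ n) (f : ℕ → ℝ) :
    ∑ i ∈ Finset.range n, f i = (∑ i ∈ Finset.Icc 2 n, f (n + 1 - i)) + f 0 := by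
  obtain ⟨m, rfl⟩ : ∃ m, n = m + 1 := ⟨n - 1, by omega⟩
  rw [Finset.sum_range_succ']
  congr 1
  refine Finset.sum_nbij' (fun i => m + 1 - i) (fun j => m + 1 - j) ?_ ?_ ?_ ?_ ?_ <;>
    intro a ha <;>
    simp only [Finset.mem_Icc, Finset.mem_range] at ha ⊢
  · omega
  · omega
  · omega
  · omega
  · congr 1; omega

lemma key (b : X →ₗ[ℝ] Y →ₗ[ℝ] ℝ) (x x₀ : X) (y₀ : Y) (n : ℕ) (hn : 1 ≤ n)
    (c d : ℕ → X × Y) (h0 : c 0 = (x₀, y₀))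
    (hcd : ∀ i, 1 ≤ i → i ≤ n → d i = c (n + 1 - i)) :
    b (x - (d 1).1) (d 1).2
      + ∑ i ∈ Finset.Icc 2 n, b ((d (i - 1)).1 - (d i).1) (d i).2
      + b (d n).1 y₀ - b x₀ y₀
    = b (x - (c n).1) (c n).2
      + ∑ i ∈ Finset.range n, b ((c (i + 1)).1 - (c i).1) (c i).2 := by
  have hd1 : d 1 = c n := by rw [hcd 1 le_rfl hn]; congr 1
  have hdn : d n = c 1 := by
    rw [hcd n hn le_rfl]; congr 1; omega
  have hsum : ∑ i ∈ Finset.Icc 2 n, b ((d (i - 1)).1 - (d i).1) (d i).2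
      = ∑ i ∈ Finset.Icc 2 n,
          (fun j => b ((c (j + 1)).1 - (c j).1) (c j).2) (n + 1 - i) := by
    refine Finset.sum_congr rfl fun i hi => ?_
    simp only [Finset.mem_Icc] at hi
    rw [hcd (i - 1) (by omega) (by omega), hcd i (by omega) hi.2]
    have h1 : n + 1 - (i - 1) = (n + 1 - i) + 1 := by omega
    rw [h1]
  rw [hd1, hdn, hsum,
    sum_rev n hn (fun j => b ((c (j + 1)).1 - (c j).1) (c j).2)]
  simp only [h0, map_sub, LinearMap.sub_apply]
  ring


/-- `r_T^{(x₀,y₀)}(x) = φ⁽∞⁾_T(x, y₀) - ⟨x₀, y₀⟩`. -/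
theorem rock_eq_fitzInf_sub (b : X →ₗ[ℝ] Y →ₗ[ℝ] ℝ) (T : Set (X × Y))
    (x₀ : X) (y₀ : Y) (hw : (x₀, y₀) ∈ T) (x : X) :
    rock b T x₀ y₀ x = fitzInf b T x y₀ - ((b x₀ y₀ : ℝ) : EReal) := by
  rw [rock, fitzInf, ← sSup_image_sub]
  congr 1
  ext r
  constructor
  · rintro ⟨n, hn, c, h0, hT, rfl⟩
    refine ⟨_, ⟨n, hn, fun i => c (n + 1 - i), fun i hi => ?_, rfl⟩, ?_⟩
    · simp only [Finset.mem_Icc] at hi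
      exact hT _ (Finset.mem_Icc.2 (by omega))
    · dsimp only; rw [← EReal.coe_sub, EReal.coe_eq_coe_iff]
      exact key b x x₀ y₀ n hn c _ h0 (fun i _ _ => rfl)
  · rintro ⟨s, ⟨n, hn, d, hT, rfl⟩, rfl⟩
    refine ⟨n, hn, fun i => if i = 0 then (x₀, y₀) else d (n + 1 - i), rfl,
      fun i hi => ?_, ?_⟩
    · simp only [Finset.mem_Icc] at hi
      simp only [show i ≠ 0 by omega, if_neg]
      exact hT _ (Finset.mem_Icc.2 (by omega))
    · dsimp only; rw [← EReal.coe_sub, EReal.coe_eq_coe_iff]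
      refine key b x x₀ y₀ n hn (fun i => if i = 0 then (x₀, y₀) else d (n + 1 - i)) d rfl fun i h1 h2 => ?_
      have : n + 1 - i ≠ 0 := by omega
      simp only [this, if_neg]
      congr 1; omega
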